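/- Let c > 1 and let X be a nice c-discrete self-similar fractal generated by V. Then the full grid graph on the i-th stage X_i is connected, for every i ∈ ℕ. -/

import Mathlib

/-- Stages of the `c`-discrete self-similar fractal generated by `V`. -/
def stage (c : ℤ) (V : Set (ℤ × ℤ)) : ℕ → Set (ℤ × ℤ)
  | 0 => {(0, 0)}
  | i + 1 =>
    stage c V i ∪
      {p | ∃ x ∈ stage c V i, ∃ v ∈ V, p = (x.1 + c ^ i * v.1, x.2 + c ^ i * v.2)}

/-- The full grid graph on `ℤ²`: edges between points at distance 1. -/
def gridGraph : SimpleGraph (ℤ × ℤ) :=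
  SimpleGraph.fromRel (fun p q => (p.1 - q.1).natAbs + (p.2 - q.2).natAbs = 1)

/-- grid adjacency as a plain relation -/
def adj1 (p q : ℤ × ℤ) : Prop := (p.1 - q.1).natAbs + (p.2 - q.2).natAbs = 1

/-- single step of reachability inside a set -/
def gstep (S : Set (ℤ × ℤ)) (p q : ℤ × ℤ) : Prop := p ∈ S ∧ q ∈ S ∧ adj1 p q

/-- reachability inside a set -/
def reach (S : Set (ℤ × ℤ)) : ℤ × ℤ → ℤ × ℤ → Prop :=
  Relation.ReflTransGen (gstep S)

lemma adj1_symm {p q : ℤ × ℤ} (h : adj1 p q) : adj1 q p := by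
  unfold adj1 at *; omega

lemma gstep_symm (S : Set (ℤ × ℤ)) : Symmetric (gstep S) := by
  rintro p q ⟨hp, hq, h⟩; exact ⟨hq, hp, adj1_symm h⟩

lemma reach_symm {S : Set (ℤ × ℤ)} {p q : ℤ × ℤ} (h : reach S p q) : reach S q p :=
  have : Std.Symm (gstep S) := ⟨fun _ _ hh => gstep_symm S hh⟩
  (Relation.ReflTransGen.stdSymm (r := gstep S)).symm _ _ h

lemma reach_mono {S T : Set (ℤ × ℤ)} (hST : S ⊆ T) {p q : ℤ × ℤ} (h : reach S p q) :
    reach T p q :=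
  Relation.ReflTransGen.mono (fun _ _ ⟨ha, hb, hab⟩ => ⟨hST ha, hST hb, hab⟩) _ _ h

lemma reach_translate {S : Set (ℤ × ℤ)} {p q : ℤ × ℤ} (w : ℤ × ℤ) (h : reach S p q) :
    reach ((fun x : ℤ × ℤ => (x.1 + w.1, x.2 + w.2)) '' S) (p.1 + w.1, p.2 + w.2)
      (q.1 + w.1, q.2 + w.2) := by
  refine Relation.ReflTransGen.lift (fun x : ℤ × ℤ => (x.1 + w.1, x.2 + w.2)) ?_ _ _ h
  rintro a b ⟨ha, hb, hab⟩
  refine ⟨⟨a, ha, rfl⟩, ⟨b, hb, rfl⟩, ?_⟩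
  unfold adj1 at *
  simpa using hab

lemma gridGraph_adj_iff {p q : ℤ × ℤ} : gridGraph.Adj p q ↔ adj1 p q := by
  rw [gridGraph, SimpleGraph.fromRel_adj]
  unfold adj1
  constructor
  · rintro ⟨hne, h | h⟩
    · exact h
    · omega
  · intro h
    refine ⟨?_, Or.inl h⟩
    intro he; subst he; simp at h

lemma connected_iff_reach (S : Set (ℤ × ℤ)) :
    (gridGraph.induce S).Connected ↔ S.Nonempty ∧ ∀ p ∈ S, ∀ q ∈ S, reach S p q := by
  constructor
  · intro h
    refine ⟨?_, ?_⟩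
    · obtain ⟨⟨p, hp⟩⟩ := h.nonempty
      exact ⟨p, hp⟩
    · intro p hp q hq
      have := h.preconnected ⟨p, hp⟩ ⟨q, hq⟩
      rw [SimpleGraph.reachable_iff_reflTransGen] at this
      show Relation.ReflTransGen (gstep S) p q
      have h2 := Relation.ReflTransGen.lift (p := gstep S) Subtype.val ?_ _ _ this
      · exact h2
      · rintro ⟨a, ha⟩ ⟨b, hb⟩ hab
        have hab' : gridGraph.Adj a b := hab
        exact ⟨ha, hb, gridGraph_adj_iff.mp hab'⟩
  · rintro ⟨⟨p₀, hp₀⟩, h⟩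
    have key : ∀ p (hp : p ∈ S) q, reach S p q → ∀ (hq : q ∈ S),
        (gridGraph.induce S).Reachable ⟨p, hp⟩ ⟨q, hq⟩ := by
      intro p hp q hr
      induction hr with
      | refl => intro hq; exact SimpleGraph.Reachable.refl _
      | @tail b c _ hbc ih =>
          intro hq
          have hb : b ∈ S := hbc.1
          refine (ih hb).trans ?_
          refine SimpleGraph.Adj.reachable ?_
          show gridGraph.Adj b c
          exact gridGraph_adj_iff.mpr hbc.2.2
    haveI : Nonempty ↥S := ⟨⟨p₀, hp₀⟩⟩
    refine SimpleGraph.Connected.mk ?_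
    rintro ⟨p, hp⟩ ⟨q, hq⟩
    exact key p hp q (h p hp q hq) hq

section Main

variable {c : ℤ} {V : Set (ℤ × ℤ)}

lemma zero_mem_stage (c : ℤ) (V : Set (ℤ × ℤ)) (i : ℕ) : ((0 : ℤ), (0 : ℤ)) ∈ stage c V i := by
  induction i with
  | zero => rfl
  | succ i ih => exact Or.inl ih

lemma row_col_mem_stage (hc : 1 < c)
    (hnice :
      (Set.Icc (0 : ℤ) (c - 1) ×ˢ ({0} : Set ℤ)) ∪ (({0} : Set ℤ) ×ˢ Set.Icc (0 : ℤ) (c - 1))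
        ⊆ V) :
    ∀ i : ℕ, ∀ t : ℤ, 0 ≤ t → t ≤ c ^ i - 1 →
      (t, (0 : ℤ)) ∈ stage c V i ∧ ((0 : ℤ), t) ∈ stage c V i := by
  intro i
  induction i with
  | zero =>
      intro t ht0 ht1
      have : t = 0 := by simpa using le_antisymm (by simpa using ht1) ht0
      subst this
      exact ⟨rfl, rfl⟩
  | succ i ih =>
      intro t ht0 ht1
      have hpow : (0 : ℤ) < c ^ i := pow_pos (lt_trans zero_lt_one hc) i
      set r := t % c ^ i with hr
      set q := t / c ^ i with hq
      have hr0 : 0 ≤ r := Int.emod_nonneg t (ne_of_gt hpow)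
      have hr1 : r < c ^ i := Int.emod_lt_of_pos t hpow
      have hq0 : 0 ≤ q := Int.ediv_nonneg ht0 (le_of_lt hpow)
      have hq1 : q < c := by
        rw [hq, Int.ediv_lt_iff_lt_mul hpow, mul_comm, ← pow_succ]
        omega
      have hsum : r + c ^ i * q = t := Int.emod_add_mul_ediv t (c ^ i)
      have hrmem := ih r hr0 (by omega)
      have hqV : ((q, (0 : ℤ)) : ℤ × ℤ) ∈ V :=
        hnice (Or.inl ⟨⟨hq0, by omega⟩, rfl⟩)
      have hqV' : (((0 : ℤ), q) : ℤ × ℤ) ∈ V :=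
        hnice (Or.inr ⟨rfl, ⟨hq0, by omega⟩⟩)
      constructor
      · refine Or.inr ⟨(r, 0), hrmem.1, (q, 0), hqV, ?_⟩
        simp [hsum]
      · refine Or.inr ⟨(0, r), hrmem.2, (0, q), hqV', ?_⟩
        simp [hsum]

lemma stage_reach (hc : 1 < c)
    (hV : V ⊆ Set.Icc (0 : ℤ) (c - 1) ×ˢ Set.Icc (0 : ℤ) (c - 1))
    (hnice :
      (Set.Icc (0 : ℤ) (c - 1) ×ˢ ({0} : Set ℤ)) ∪ (({0} : Set ℤ) ×ˢ Set.Icc (0 : ℤ) (c - 1))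
        ⊆ V)
    (hVreach : ∀ v ∈ V, ∀ w ∈ V, reach V v w) :
    ∀ i : ℕ, ∀ p ∈ stage c V i, ∀ q ∈ stage c V i, reach (stage c V i) p q := by
  intro i
  induction i with
  | zero =>
      intro p hp q hq
      have hp' : p = (0, 0) := hp
      have hq' : q = (0, 0) := hq
      subst hp'; subst hq'
      exact Relation.ReflTransGen.refl
  | succ i ih =>
      intro p hp q hq
      have hpow : (0 : ℤ) < c ^ i := pow_pos (lt_trans zero_lt_one hc) i
      set Si := stage c V i with hSi
      set S := stage c V (i + 1) with hS
      -- membership of translated blocks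
      have memT : ∀ v ∈ V, ∀ x ∈ Si, ((x.1 + c ^ i * v.1, x.2 + c ^ i * v.2) : ℤ × ℤ) ∈ S := by
        intro v hv x hx
        exact Or.inr ⟨x, hx, v, hv, rfl⟩
      have zeroV : ((0 : ℤ), (0 : ℤ)) ∈ V := hnice (Or.inl ⟨⟨le_refl 0, by omega⟩, rfl⟩)
      -- every point of S is in some block
      have decomp : ∀ p ∈ S, ∃ v ∈ V, ∃ x ∈ Si,
          p = (x.1 + c ^ i * v.1, x.2 + c ^ i * v.2) := by
        intro p hp
        rcases hp with hp | ⟨x, hx, v, hv, hpe⟩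
        · exact ⟨(0, 0), zeroV, p, hp, by simp⟩
        · exact ⟨v, hv, x, hx, hpe⟩
      -- reach within a block
      have reach_block : ∀ v ∈ V, ∀ x ∈ Si, ∀ y ∈ Si,
          reach S (x.1 + c ^ i * v.1, x.2 + c ^ i * v.2)
            (y.1 + c ^ i * v.1, y.2 + c ^ i * v.2) := by
        intro v hv x hx y hy
        have h := reach_translate (c ^ i * v.1, c ^ i * v.2) (ih x hx y hy)
        refine reach_mono ?_ h
        rintro z ⟨a, ha, rfl⟩
        exact memT v hv a ha
      -- corner of a block
      have corner_mem : ∀ v ∈ V, ((c ^ i * v.1, c ^ i * v.2) : ℤ × ℤ) ∈ S := by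
        intro v hv
        have := memT v hv (0, 0) (zero_mem_stage c V i)
        simpa using this
      have rc := row_col_mem_stage hc hnice i
      have hrow : ((c ^ i - 1, (0 : ℤ)) : ℤ × ℤ) ∈ Si := (rc (c ^ i - 1) (by omega) (by omega)).1
      have hcol : (((0 : ℤ), c ^ i - 1) : ℤ × ℤ) ∈ Si := (rc (c ^ i - 1) (by omega) (by omega)).2
      -- one directed step between corners of horizontally/vertically adjacent blocks
      have corner_step_h : ∀ v ∈ V, ∀ w ∈ V, w.1 = v.1 + 1 → w.2 = v.2 →
          reach S (c ^ i * v.1, c ^ i * v.2) (c ^ i * w.1, c ^ i * w.2) := by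
        intro v hv w hw h1 h2
        have ha : ((c ^ i - 1 + c ^ i * v.1, 0 + c ^ i * v.2) : ℤ × ℤ) ∈ S :=
          memT v hv (c ^ i - 1, 0) hrow
        have r1 : reach S (c ^ i * v.1, c ^ i * v.2)
            (c ^ i - 1 + c ^ i * v.1, 0 + c ^ i * v.2) := by
          have := reach_block v hv (0, 0) (zero_mem_stage c V i) (c ^ i - 1, 0) hrow
          simpa using this
        refine r1.tail ?_
        refine ⟨ha, corner_mem w hw, ?_⟩
        unfold adj1
        have e1 : (c ^ i - 1 + c ^ i * v.1) - c ^ i * w.1 = -1 := by rw [h1]; ring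
        have e2 : (0 + c ^ i * v.2) - c ^ i * w.2 = 0 := by rw [h2]; ring
        simp only [e1, e2]
        rfl
      have corner_step_v : ∀ v ∈ V, ∀ w ∈ V, w.1 = v.1 → w.2 = v.2 + 1 →
          reach S (c ^ i * v.1, c ^ i * v.2) (c ^ i * w.1, c ^ i * w.2) := by
        intro v hv w hw h1 h2
        have ha : ((0 + c ^ i * v.1, c ^ i - 1 + c ^ i * v.2) : ℤ × ℤ) ∈ S :=
          memT v hv (0, c ^ i - 1) hcol
        have r1 : reach S (c ^ i * v.1, c ^ i * v.2)
            (0 + c ^ i * v.1, c ^ i - 1 + c ^ i * v.2) := by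
          have := reach_block v hv (0, 0) (zero_mem_stage c V i) (0, c ^ i - 1) hcol
          simpa using this
        refine r1.tail ?_
        refine ⟨ha, corner_mem w hw, ?_⟩
        unfold adj1
        have e1 : (0 + c ^ i * v.1) - c ^ i * w.1 = 0 := by rw [h1]; ring
        have e2 : (c ^ i - 1 + c ^ i * v.2) - c ^ i * w.2 = -1 := by rw [h2]; ring
        simp only [e1, e2]
        rfl
      have corner_step : ∀ v ∈ V, ∀ w ∈ V, adj1 v w →
          reach S (c ^ i * v.1, c ^ i * v.2) (c ^ i * w.1, c ^ i * w.2) := by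
        intro v hv w hw h
        unfold adj1 at h
        rcases (by omega : (w.1 = v.1 + 1 ∧ w.2 = v.2) ∨ (v.1 = w.1 + 1 ∧ v.2 = w.2) ∨
            (w.1 = v.1 ∧ w.2 = v.2 + 1) ∨ (v.1 = w.1 ∧ v.2 = w.2 + 1)) with
          h' | h' | h' | h'
        · exact corner_step_h v hv w hw h'.1 h'.2
        · exact reach_symm (corner_step_h w hw v hv h'.1 h'.2)
        · exact corner_step_v v hv w hw h'.1 h'.2
        · exact reach_symm (corner_step_v w hw v hv h'.1 h'.2)
      -- corners of any two blocks are connected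
      have corner_reach : ∀ v ∈ V, ∀ w ∈ V,
          reach S (c ^ i * v.1, c ^ i * v.2) (c ^ i * w.1, c ^ i * w.2) := by
        intro v hv w hw
        have h := hVreach v hv w hw
        clear hw
        induction h with
        | refl => exact Relation.ReflTransGen.refl
        | @tail b d _ hbd ih' =>
            exact ih'.trans (corner_step b hbd.1 d hbd.2.1 hbd.2.2)
      -- finish
      obtain ⟨vp, hvp, xp, hxp, hpe⟩ := decomp p hp
      obtain ⟨vq, hvq, xq, hxq, hqe⟩ := decomp q hq
      subst hpe; subst hqe
      have r1 : reach S (xp.1 + c ^ i * vp.1, xp.2 + c ^ i * vp.2)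
          (c ^ i * vp.1, c ^ i * vp.2) := by
        have := reach_block vp hvp xp hxp (0, 0) (zero_mem_stage c V i)
        simpa using this
      have r2 := corner_reach vp hvp vq hvq
      have r3 : reach S (c ^ i * vq.1, c ^ i * vq.2)
          (xq.1 + c ^ i * vq.1, xq.2 + c ^ i * vq.2) := by
        have := reach_block vq hvq (0, 0) (zero_mem_stage c V i) xq hxq
        simpa using this
      exact (r1.trans r2).trans r3

end Main

/-- For a nice self-similar fractal, every stage has connected full grid graph. -/
theorem stage_gridGraph_connected (c : ℤ) (hc : 1 < c) (V : Set (ℤ × ℤ))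
    (hV : V ⊆ Set.Icc (0 : ℤ) (c - 1) ×ˢ Set.Icc (0 : ℤ) (c - 1))
    (hnice :
      (Set.Icc (0 : ℤ) (c - 1) ×ˢ ({0} : Set ℤ)) ∪ (({0} : Set ℤ) ×ˢ Set.Icc (0 : ℤ) (c - 1))
        ⊆ V)
    (hconn : (gridGraph.induce V).Connected) :
    ∀ i : ℕ, (gridGraph.induce (stage c V i)).Connected := by
  intro i
  have hVreach := ((connected_iff_reach V).mp hconn).2
  rw [connected_iff_reach]
  exact ⟨⟨(0, 0), zero_mem_stage c V i⟩, stage_reach hc hV hnice hVreach i⟩
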